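/- The characteristic polynomial of the matrix A from the perturbed tridiagonal Toeplitz family factors as det(A − λI_n) = (α + β + γ − λ)·det(Ã − λI_{n−1}), where Ã is the (n−1)×(n−1) tridiagonal Toeplitz matrix tridiag(β, α, γ). -/

import Mathlib

open Matrix

/-- The `n × n` tridiagonal matrix with diagonal `α` except the `(1,1)` entry `α + γ`
and the `(n,n)` entry `α + β`, superdiagonal `β`, subdiagonal `γ`. -/
def triRefl (n : ℕ) (α β γ : ℂ) : Matrix (Fin n) (Fin n) ℂ :=
  Matrix.of fun i j =>
    if (i : ℕ) = (j : ℕ) then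
      α + (if (i : ℕ) = 0 then γ else 0) + (if (i : ℕ) = n - 1 then β else 0)
    else if (i : ℕ) + 1 = (j : ℕ) then β
    else if (j : ℕ) + 1 = (i : ℕ) then γ
    else 0

/-- The `n × n` tridiagonal Toeplitz matrix `tridiag(β, α, γ)`. -/
def triToep (n : ℕ) (α β γ : ℂ) : Matrix (Fin n) (Fin n) ℂ :=
  Matrix.of fun i j =>
    if (i : ℕ) = (j : ℕ) then α
    else if (i : ℕ) + 1 = (j : ℕ) then β
    else if (j : ℕ) + 1 = (i : ℕ) then γ
    else 0

/-- Auxiliary: tridiagonal Toeplitz matrix with diagonal `a`, superdiagonal `b`,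
subdiagonal `c`, plus `d` added at the bottom-right corner. -/
def Tr (k : ℕ) (a b c d : ℂ) : Matrix (Fin k) (Fin k) ℂ :=
  Matrix.of fun i j =>
    if (i : ℕ) = (j : ℕ) then (if (i : ℕ) = k - 1 then a + d else a)
    else if (i : ℕ) + 1 = (j : ℕ) then b
    else if (j : ℕ) + 1 = (i : ℕ) then c
    else 0

/-- Auxiliary: like `Tr` but additionally `e` added at the top-left corner. -/
def Gen (k : ℕ) (a b c d e : ℂ) : Matrix (Fin k) (Fin k) ℂ :=
  Matrix.of fun i j =>
    if (i : ℕ) = (j : ℕ) then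
      a + (if (i : ℕ) = 0 then e else 0) + (if (i : ℕ) = k - 1 then d else 0)
    else if (i : ℕ) + 1 = (j : ℕ) then b
    else if (j : ℕ) + 1 = (i : ℕ) then c
    else 0

lemma Tr_zero_det (a b c d : ℂ) : (Tr 0 a b c d).det = 1 := Matrix.det_fin_zero

lemma Tr_one_det (a b c d : ℂ) : (Tr 1 a b c d).det = a + d := by
  simp [Matrix.det_fin_one, Tr]

set_option linter.unreachableTactic false in
set_option linter.unusedTactic false in
lemma Tr_rec (k : ℕ) (a b c d : ℂ) :
    (Tr (k+2) a b c d).det = a * (Tr (k+1) a b c d).det - b * (c * (Tr k a b c d).det) := by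
  rw [Matrix.det_succ_row_zero]
  rw [Fin.sum_univ_succ, Fin.sum_univ_succ]
  have hz : ∀ j : Fin k,
      (-1 : ℂ) ^ ((j.succ.succ : Fin (k+2)) : ℕ) * Tr (k+2) a b c d 0 j.succ.succ *
        ((Tr (k+2) a b c d).submatrix Fin.succ j.succ.succ.succAbove).det = 0 := by
    intro j
    have hj := j.isLt
    have : Tr (k+2) a b c d 0 j.succ.succ = 0 := by
      simp only [Tr, Matrix.of_apply, Fin.val_succ, Fin.val_zero]
      split_ifs <;> first | rfl | (exfalso; first | exact ‹False› | omega)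
    simp [this]
  rw [Finset.sum_eq_zero fun j _ => hz j]
  have h00 : Tr (k+2) a b c d 0 0 = a := by
    simp only [Tr, Matrix.of_apply, Fin.val_zero]
    split_ifs <;> first | rfl | (exfalso; first | exact ‹False› | omega)
  have h01 : Tr (k+2) a b c d 0 (Fin.succ 0) = b := by
    have h1 : ((Fin.succ (0 : Fin (k+1)) : Fin (k+2)) : ℕ) = 1 := rfl
    simp only [Tr, Matrix.of_apply, Fin.val_zero, h1]
    split_ifs <;> first | rfl | (exfalso; first | exact ‹False› | omega)
  have hm0 : (Tr (k+2) a b c d).submatrix Fin.succ (Fin.succAbove 0) = Tr (k+1) a b c d := by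
    ext i j
    have hi := i.isLt; have hj := j.isLt
    simp only [Fin.succAbove_zero, Matrix.submatrix_apply, Tr, Matrix.of_apply, Fin.val_succ]
    split_ifs <;> first | rfl | (exfalso; first | exact ‹False› | omega)
  have hsa10 : (Fin.succAbove (1 : Fin (k+2)) (0 : Fin (k+1))) = 0 := by
    ext
    simp [Fin.succAbove, Fin.lt_def]
  have hm1 : ((Tr (k+2) a b c d).submatrix Fin.succ (Fin.succAbove 1)).det
      = c * (Tr k a b c d).det := by
    rw [Matrix.det_succ_column_zero, Fin.sum_univ_succ]
    have hz2 : ∀ i : Fin k,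
        (-1 : ℂ) ^ ((i.succ : Fin (k+1)) : ℕ) *
          (Tr (k+2) a b c d).submatrix Fin.succ (Fin.succAbove 1) i.succ 0 *
          (((Tr (k+2) a b c d).submatrix Fin.succ (Fin.succAbove 1)).submatrix
            i.succ.succAbove Fin.succ).det = 0 := by
      intro i
      have hi := i.isLt
      have hzz : (Tr (k+2) a b c d) i.succ.succ (0 : Fin (k+2)) = 0 := by
        simp only [Tr, Matrix.of_apply, Fin.val_succ, Fin.val_zero]
        split_ifs <;> first | rfl | (exfalso; first | exact ‹False› | omega)
      have : (Tr (k+2) a b c d).submatrix Fin.succ (Fin.succAbove 1) i.succ 0 = 0 := by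
        rw [Matrix.submatrix_apply, hsa10, hzz]
      simp [this, hsa10, hzz]
    rw [Finset.sum_eq_zero fun i _ => hz2 i]
    have hc : (Tr (k+2) a b c d).submatrix Fin.succ (Fin.succAbove 1) 0 0 = c := by
      rw [Matrix.submatrix_apply, hsa10]
      have h1 : ((Fin.succ (0 : Fin (k+1)) : Fin (k+2)) : ℕ) = 1 := rfl
      simp only [Tr, Matrix.of_apply, Fin.val_zero, h1]
      split_ifs <;> first | rfl | (exfalso; first | exact ‹False› | omega)
    have hmm : ((Tr (k+2) a b c d).submatrix Fin.succ (Fin.succAbove 1)).submatrix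
        (Fin.succAbove 0) Fin.succ = Tr k a b c d := by
      ext i j
      have hi := i.isLt; have hj := j.isLt
      have hv : ((Fin.succAbove (1 : Fin (k+2)) (Fin.succ j) : Fin (k+2)) : ℕ) = (j : ℕ) + 2 := by
        simp [Fin.succAbove, Fin.lt_def]
      simp only [Fin.succAbove_zero, Matrix.submatrix_apply, Tr, Matrix.of_apply, Fin.val_succ, hv]
      split_ifs <;> first | rfl | (exfalso; first | exact ‹False› | omega)
    rw [hc, hmm]
    simp
  rw [Fin.succ_zero_eq_one] at *
  rw [h00, h01, hm0, hm1]
  simp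
  ring

set_option linter.unreachableTactic false in
set_option linter.unusedTactic false in
lemma Gen_rec (k : ℕ) (a b c d e : ℂ) :
    (Gen (k+2) a b c d e).det
      = (a + e) * (Tr (k+1) a b c d).det - b * (c * (Tr k a b c d).det) := by
  rw [Matrix.det_succ_row_zero]
  rw [Fin.sum_univ_succ, Fin.sum_univ_succ]
  have hz : ∀ j : Fin k,
      (-1 : ℂ) ^ ((j.succ.succ : Fin (k+2)) : ℕ) * Gen (k+2) a b c d e 0 j.succ.succ *
        ((Gen (k+2) a b c d e).submatrix Fin.succ j.succ.succ.succAbove).det = 0 := by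
    intro j
    have hj := j.isLt
    have : Gen (k+2) a b c d e 0 j.succ.succ = 0 := by
      simp only [Gen, Matrix.of_apply, Fin.val_succ, Fin.val_zero]
      split_ifs <;> first | ring1 | (exfalso; first | exact ‹False› | omega)
    simp [this]
  rw [Finset.sum_eq_zero fun j _ => hz j]
  have h00 : Gen (k+2) a b c d e 0 0 = a + e := by
    simp only [Gen, Matrix.of_apply, Fin.val_zero]
    split_ifs <;> first | ring1 | (exfalso; first | exact ‹False› | omega) | simp_all
  have h01 : Gen (k+2) a b c d e 0 (Fin.succ 0) = b := by
    have h1 : ((Fin.succ (0 : Fin (k+1)) : Fin (k+2)) : ℕ) = 1 := rfl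
    simp only [Gen, Matrix.of_apply, Fin.val_zero, h1]
    split_ifs <;> first | ring1 | (exfalso; first | exact ‹False› | omega)
  have hm0 : (Gen (k+2) a b c d e).submatrix Fin.succ (Fin.succAbove 0) = Tr (k+1) a b c d := by
    ext i j
    have hi := i.isLt; have hj := j.isLt
    simp only [Fin.succAbove_zero, Matrix.submatrix_apply, Gen, Tr, Matrix.of_apply, Fin.val_succ]
    split_ifs <;> first | ring1 | (exfalso; first | exact ‹False› | omega)
  have hsa10 : (Fin.succAbove (1 : Fin (k+2)) (0 : Fin (k+1))) = 0 := by
    ext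
    simp [Fin.succAbove, Fin.lt_def]
  have hm1 : ((Gen (k+2) a b c d e).submatrix Fin.succ (Fin.succAbove 1)).det
      = c * (Tr k a b c d).det := by
    rw [Matrix.det_succ_column_zero, Fin.sum_univ_succ]
    have hz2 : ∀ i : Fin k,
        (-1 : ℂ) ^ ((i.succ : Fin (k+1)) : ℕ) *
          (Gen (k+2) a b c d e).submatrix Fin.succ (Fin.succAbove 1) i.succ 0 *
          (((Gen (k+2) a b c d e).submatrix Fin.succ (Fin.succAbove 1)).submatrix
            i.succ.succAbove Fin.succ).det = 0 := by
      intro i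
      have hi := i.isLt
      have hzz : (Gen (k+2) a b c d e) i.succ.succ (0 : Fin (k+2)) = 0 := by
        simp only [Gen, Matrix.of_apply, Fin.val_succ, Fin.val_zero]
        split_ifs <;> first | ring1 | (exfalso; first | exact ‹False› | omega) | simp_all
      have : (Gen (k+2) a b c d e).submatrix Fin.succ (Fin.succAbove 1) i.succ 0 = 0 := by
        rw [Matrix.submatrix_apply, hsa10, hzz]
      simp [this, hsa10, hzz]
    rw [Finset.sum_eq_zero fun i _ => hz2 i]
    have hc : (Gen (k+2) a b c d e).submatrix Fin.succ (Fin.succAbove 1) 0 0 = c := by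
      rw [Matrix.submatrix_apply, hsa10]
      have h1 : ((Fin.succ (0 : Fin (k+1)) : Fin (k+2)) : ℕ) = 1 := rfl
      simp only [Gen, Matrix.of_apply, Fin.val_zero, h1]
      split_ifs <;> first | ring1 | (exfalso; first | exact ‹False› | omega)
    have hmm : ((Gen (k+2) a b c d e).submatrix Fin.succ (Fin.succAbove 1)).submatrix
        (Fin.succAbove 0) Fin.succ = Tr k a b c d := by
      ext i j
      have hi := i.isLt; have hj := j.isLt
      have hv : ((Fin.succAbove (1 : Fin (k+2)) (Fin.succ j) : Fin (k+2)) : ℕ) = (j : ℕ) + 2 := by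
        simp [Fin.succAbove, Fin.lt_def]
      simp only [Fin.succAbove_zero, Matrix.submatrix_apply, Gen, Tr, Matrix.of_apply,
        Fin.val_succ, hv]
      split_ifs <;> first | ring1 | (exfalso; first | exact ‹False› | omega)
    rw [hc, hmm]
    simp
  rw [Fin.succ_zero_eq_one] at *
  rw [h00, h01, hm0, hm1]
  simp
  ring

lemma FD (a b c d : ℂ) : ∀ k : ℕ,
    (Tr (k+1) a b c d).det = (Tr (k+1) a b c 0).det + d * (Tr k a b c 0).det := by
  intro k
  induction k using Nat.twoStepInduction with
  | zero => rw [Tr_one_det, Tr_one_det, Tr_zero_det]; ring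
  | one =>
    show (Tr (0+2) a b c d).det = (Tr (0+2) a b c 0).det + d * (Tr 1 a b c 0).det
    rw [Tr_rec 0 a b c d, Tr_rec 0 a b c 0]; simp [Tr_one_det, Tr_zero_det, Tr]
    ring
  | more k ih ih2 =>
    rw [show k+1+1 = k+2 from rfl] at ih2
    rw [show k+2+1 = (k+1)+2 from rfl, Tr_rec (k+1) a b c d, Tr_rec (k+1) a b c 0,
      ih2, ih, Tr_rec k a b c 0]
    ring

set_option linter.unreachableTactic false in
set_option linter.unusedTactic false in
/-- `det(A − λIₙ) = (α + β + γ − λ) · det(Ã − λI_{n−1})` where `A` is the perturbed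
tridiagonal Toeplitz matrix and `Ã = tridiag(β, α, γ)` of size `n − 1`. -/
theorem stmt3 (n : ℕ) (hn : 2 ≤ n) (α β γ : ℂ) (lam : ℂ) :
    (triRefl n α β γ - lam • (1 : Matrix (Fin n) (Fin n) ℂ)).det =
      (α + β + γ - lam) *
        (triToep (n - 1) α β γ - lam • (1 : Matrix (Fin (n - 1)) (Fin (n - 1)) ℂ)).det := by
  obtain ⟨m, rfl⟩ : ∃ m, n = m + 2 := ⟨n - 2, by omega⟩
  have hL : triRefl (m+2) α β γ - lam • (1 : Matrix (Fin (m+2)) (Fin (m+2)) ℂ)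
      = Gen (m+2) (α - lam) β γ β γ := by
    ext i j
    have hi := i.isLt; have hj := j.isLt
    simp only [Matrix.sub_apply, Matrix.smul_apply, Matrix.one_apply, smul_eq_mul,
      triRefl, Gen, Matrix.of_apply, Fin.ext_iff]
    split_ifs <;> first | ring1 | (exfalso; first | exact ‹False› | omega)
  have hR : triToep (m+1) α β γ - lam • (1 : Matrix (Fin (m+1)) (Fin (m+1)) ℂ)
      = Tr (m+1) (α - lam) β γ 0 := by
    ext i j
    have hi := i.isLt; have hj := j.isLt
    simp only [Matrix.sub_apply, Matrix.smul_apply, Matrix.one_apply, smul_eq_mul,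
      triToep, Tr, Matrix.of_apply, Fin.ext_iff]
    split_ifs <;> first | ring1 | (exfalso; first | exact ‹False› | omega)
  show (triRefl (m+2) α β γ - lam • 1).det
      = (α + β + γ - lam) * (triToep (m+1) α β γ - lam • 1).det
  rw [hL, hR, Gen_rec]
  rcases m with _ | m'
  · rw [Tr_one_det, Tr_one_det, Tr_zero_det]
    ring
  · rw [FD (α - lam) β γ β (m'+1), FD (α - lam) β γ β m', Tr_rec m' (α - lam) β γ 0]
    ring
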